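/- For every integer v ≥ 1 and every real x > 0, the v×v matrix M(x) with entries M_{jk}(x) = (F_v(x)/F_{v+4}(x)) · ( [(v+2)δ_{jk} − 1]·F_{v+4}(x)/F_v(x) − [vδ_{jk} − 1]·F_{v+2}(x)²/F_v(x)² ) / ( (v+2)·F_{v+4}(x)/F_v(x) − v·F_{v+2}(x)²/F_v(x)² ) is the inverse of J(x), i.e. J(x)·M(x) equals the v×v identity matrix. -/

import Mathlib

open Real

/-- Chi-squared cumulative distribution function with `ν` degrees of freedom. -/
noncomputable def chiCDF (ν x : ℝ) : ℝ :=
  ((2 : ℝ) ^ (ν / 2) * Real.Gamma (ν / 2))⁻¹ *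
    ∫ t in (0 : ℝ)..x, t ^ (ν / 2 - 1) * Real.exp (-t / 2)

/-- The `v×v` matrix `J(x)` with entries
`J_{kj}(x) = (1/2)·[(1 + 2δ_{kj})·F_{v+4}(x)/F_v(x) − F_{v+2}(x)²/F_v(x)²]`. -/
noncomputable def Jmat (v : ℕ) (x : ℝ) : Matrix (Fin v) (Fin v) ℝ :=
  Matrix.of fun k j =>
    (1 / 2) * ((1 + 2 * (if k = j then (1 : ℝ) else 0)) * chiCDF (v + 4) x / chiCDF v x
      - (chiCDF (v + 2) x) ^ 2 / (chiCDF v x) ^ 2)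

section Aux

open MeasureTheory Set ENNReal

lemma myIntegrableOn {r x : ℝ} (hr : -1 < r) (hx : 0 ≤ x) :
    IntegrableOn (fun t => t ^ r * Real.exp (-t / 2)) (Ioc 0 x) := by
  rw [← intervalIntegrable_iff_integrableOn_Ioc_of_le hx]
  exact (intervalIntegral.intervalIntegrable_rpow' hr).mul_continuousOn
    (Continuous.continuousOn (by continuity))

lemma myPosInterval {r x : ℝ} (hr : -1 < r) (hx : 0 < x) :
    0 < ∫ t in (0:ℝ)..x, t ^ r * Real.exp (-t / 2) := by
  apply intervalIntegral.intervalIntegral_pos_of_pos_on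
  · rw [intervalIntegrable_iff_integrableOn_Ioc_of_le hx.le]
    exact myIntegrableOn hr hx.le
  · intro t ht
    exact mul_pos (Real.rpow_pos_of_pos ht.1 r) (Real.exp_pos _)
  · exact hx

lemma myPos {r x : ℝ} (hr : -1 < r) (hx : 0 < x) :
    0 < ∫ t in Ioc 0 x, t ^ r * Real.exp (-t / 2) := by
  rw [← intervalIntegral.integral_of_le hx.le]
  exact myPosInterval hr hx

lemma myCS {a x : ℝ} (ha : -1 < 2 * a) (hx : 0 < x) :
    (∫ t in Ioc 0 x, t ^ (2 * a + 1) * Real.exp (-t / 2)) ^ 2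
      < (∫ t in Ioc 0 x, t ^ (2 * a) * Real.exp (-t / 2))
        * (∫ t in Ioc 0 x, t ^ (2 * a + 2) * Real.exp (-t / 2)) := by
  set g0 := ∫ t in Ioc 0 x, t ^ (2 * a) * Real.exp (-t / 2) with hg0def
  set g2 := ∫ t in Ioc 0 x, t ^ (2 * a + 1) * Real.exp (-t / 2) with hg2def
  set g4 := ∫ t in Ioc 0 x, t ^ (2 * a + 2) * Real.exp (-t / 2) with hg4def
  have i0 : IntegrableOn (fun t => t ^ (2 * a) * Real.exp (-t / 2)) (Ioc 0 x) :=
    myIntegrableOn ha hx.le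
  have i2 : IntegrableOn (fun t => t ^ (2 * a + 1) * Real.exp (-t / 2)) (Ioc 0 x) :=
    myIntegrableOn (by linarith) hx.le
  have i4 : IntegrableOn (fun t => t ^ (2 * a + 2) * Real.exp (-t / 2)) (Ioc 0 x) :=
    myIntegrableOn (by linarith) hx.le
  have p0 : 0 < g0 := myPos ha hx
  have p4 : 0 < g4 := myPos (by linarith) hx
  have hcongr : ∀ t ∈ Ioc 0 x,
      (g4 * (t ^ a * Real.exp (-t / 4)) - g2 * (t ^ (a + 1) * Real.exp (-t / 4))) ^ 2
        = g4 ^ 2 * (t ^ (2 * a) * Real.exp (-t / 2))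
          - 2 * g4 * g2 * (t ^ (2 * a + 1) * Real.exp (-t / 2))
          + g2 ^ 2 * (t ^ (2 * a + 2) * Real.exp (-t / 2)) := by
    intro t ht
    have htpos : (0:ℝ) < t := ht.1
    have h1 : t ^ a * t ^ a = t ^ (2 * a) := by
      rw [← Real.rpow_add htpos]; ring_nf
    have h2 : t ^ a * t ^ (a + 1) = t ^ (2 * a + 1) := by
      rw [← Real.rpow_add htpos]; ring_nf
    have h3 : t ^ (a + 1) * t ^ (a + 1) = t ^ (2 * a + 2) := by
      rw [← Real.rpow_add htpos]; ring_nf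
    have he : Real.exp (-t / 4) * Real.exp (-t / 4) = Real.exp (-t / 2) := by
      rw [← Real.exp_add]; ring_nf
    calc (g4 * (t ^ a * Real.exp (-t / 4)) - g2 * (t ^ (a + 1) * Real.exp (-t / 4))) ^ 2
        = g4 ^ 2 * ((t ^ a * t ^ a) * (Real.exp (-t / 4) * Real.exp (-t / 4)))
          - 2 * g4 * g2 * ((t ^ a * t ^ (a + 1)) * (Real.exp (-t / 4) * Real.exp (-t / 4)))
          + g2 ^ 2 * ((t ^ (a + 1) * t ^ (a + 1)) * (Real.exp (-t / 4) * Real.exp (-t / 4))) := by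
          ring
      _ = _ := by rw [h1, h2, h3, he]
  have hint : ∫ t in Ioc 0 x,
      (g4 * (t ^ a * Real.exp (-t / 4)) - g2 * (t ^ (a + 1) * Real.exp (-t / 4))) ^ 2
        = g4 * (g0 * g4 - g2 ^ 2) := by
    rw [setIntegral_congr_fun measurableSet_Ioc hcongr]
    have hf' : Integrable (fun t : ℝ => g4 ^ 2 * (t ^ (2 * a) * Real.exp (-t / 2))
        - 2 * g4 * g2 * (t ^ (2 * a + 1) * Real.exp (-t / 2)))
        (MeasureTheory.volume.restrict (Ioc 0 x)) :=
      (i0.const_mul _).sub (i2.const_mul _)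
    rw [integral_add hf' (i4.const_mul _),
      integral_sub (i0.const_mul _) (i2.const_mul _),
      MeasureTheory.integral_const_mul, MeasureTheory.integral_const_mul,
      MeasureTheory.integral_const_mul]
    rw [← hg0def, ← hg2def, ← hg4def]
    ring
  have hInt : IntegrableOn
      (fun t => (g4 * (t ^ a * Real.exp (-t / 4)) - g2 * (t ^ (a + 1) * Real.exp (-t / 4))) ^ 2)
      (Ioc 0 x) := by
    apply Integrable.congr (((i0.const_mul (g4 ^ 2)).sub (i2.const_mul (2 * g4 * g2))).add
      (i4.const_mul (g2 ^ 2)))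
    filter_upwards [ae_restrict_mem measurableSet_Ioc] with t ht
    exact (hcongr t ht).symm
  have hpos : 0 < ∫ t in Ioc 0 x,
      (g4 * (t ^ a * Real.exp (-t / 4)) - g2 * (t ^ (a + 1) * Real.exp (-t / 4))) ^ 2 := by
    rw [integral_pos_iff_support_of_nonneg_ae
      (Filter.Eventually.of_forall fun t => sq_nonneg _) hInt]
    have hsub : Ioc 0 x \ {g4 / g2} ⊆ Function.support
        fun t => (g4 * (t ^ a * Real.exp (-t / 4)) - g2 * (t ^ (a + 1) * Real.exp (-t / 4))) ^ 2 := by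
      rintro t ⟨ht, hne⟩
      simp only [Function.mem_support]
      intro h0
      have h0' : g4 * (t ^ a * Real.exp (-t / 4)) - g2 * (t ^ (a + 1) * Real.exp (-t / 4)) = 0 :=
        pow_eq_zero_iff (two_ne_zero) |>.mp h0
      have hfac : t ^ a * Real.exp (-t / 4) * (g4 - g2 * t) = 0 := by
        rw [Real.rpow_add_one (ne_of_gt ht.1)] at h0'
        linear_combination h0'
      have hu : t ^ a * Real.exp (-t / 4) ≠ 0 :=
        ne_of_gt (_root_.mul_pos (Real.rpow_pos_of_pos ht.1 a) (Real.exp_pos _))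
      have hg : g4 - g2 * t = 0 := by
        rcases mul_eq_zero.mp hfac with h | h
        · exact absurd h hu
        · exact h
      have hg2 : g2 ≠ 0 := by
        intro h
        rw [h] at hg
        simp at hg
        exact absurd hg (ne_of_gt p4)
      apply hne
      have : t = g4 / g2 := by
        field_simp
        linarith
      simp [this]
    calc (0:ℝ≥0∞) < ENNReal.ofReal x := by simp [hx]
      _ = volume.restrict (Ioc 0 x) (Ioc 0 x \ {g4 / g2}) := by
          rw [Measure.restrict_apply (measurableSet_Ioc.diff (measurableSet_singleton _))]
          rw [Set.inter_eq_left.mpr Set.diff_subset]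
          rw [measure_diff_null (measure_singleton _)]
          rw [Real.volume_Ioc]
          norm_num
      _ ≤ _ := measure_mono hsub
  rw [hint] at hpos
  have h2 : 0 < g0 * g4 - g2 ^ 2 := (mul_pos_iff_of_pos_left p4).mp hpos
  linarith

lemma chiCDF_eq {ν x : ℝ} (hx : 0 ≤ x) :
    chiCDF ν x = ((2 : ℝ) ^ (ν / 2) * Real.Gamma (ν / 2))⁻¹ *
      ∫ t in Ioc 0 x, t ^ (ν / 2 - 1) * Real.exp (-t / 2) := by
  rw [chiCDF, intervalIntegral.integral_of_le hx]

lemma chiCDF_pos {ν x : ℝ} (hν : 0 < ν) (hx : 0 < x) : 0 < chiCDF ν x := by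
  rw [chiCDF_eq hx.le]
  apply _root_.mul_pos
  · rw [inv_pos]
    exact _root_.mul_pos (Real.rpow_pos_of_pos two_pos _) (Real.Gamma_pos_of_pos (by linarith))
  · exact myPos (by linarith) hx

lemma key_ineq (v : ℕ) (hv : 1 ≤ v) {x : ℝ} (hx : 0 < x) :
    (v : ℝ) * (chiCDF (v + 2) x) ^ 2 < ((v : ℝ) + 2) * chiCDF (v + 4) x * chiCDF v x := by
  have hv0 : (0:ℝ) < (v:ℝ) := by exact_mod_cast hv
  set a : ℝ := ((v:ℝ) / 2 - 1) / 2 with ha_def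
  have ha : -1 < 2 * a := by
    rw [ha_def]; push_cast; nlinarith
  have e0 : (v:ℝ) / 2 - 1 = 2 * a := by rw [ha_def]; ring
  have e2 : ((v:ℝ) + 2) / 2 - 1 = 2 * a + 1 := by rw [ha_def]; ring
  have e4 : ((v:ℝ) + 4) / 2 - 1 = 2 * a + 2 := by rw [ha_def]; ring
  set g0 := ∫ t in Ioc (0:ℝ) x, t ^ (2 * a) * Real.exp (-t / 2) with hg0
  set g2 := ∫ t in Ioc (0:ℝ) x, t ^ (2 * a + 1) * Real.exp (-t / 2) with hg2
  set g4 := ∫ t in Ioc (0:ℝ) x, t ^ (2 * a + 2) * Real.exp (-t / 2) with hg4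
  have hcs : g2 ^ 2 < g0 * g4 := myCS ha hx
  set P := (2:ℝ) ^ ((v:ℝ) / 2) with hP_def
  set G := Real.Gamma ((v:ℝ) / 2) with hG_def
  have hP : 0 < P := Real.rpow_pos_of_pos two_pos _
  have hG : 0 < G := Real.Gamma_pos_of_pos (by positivity)
  have hP2 : (2:ℝ) ^ (((v:ℝ) + 2) / 2) = 2 * P := by
    rw [hP_def, show ((v:ℝ) + 2) / 2 = (v:ℝ) / 2 + 1 by ring,
      Real.rpow_add_one (two_ne_zero)]; ring
  have hP4 : (2:ℝ) ^ (((v:ℝ) + 4) / 2) = 4 * P := by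
    rw [hP_def, show ((v:ℝ) + 4) / 2 = (v:ℝ) / 2 + 1 + 1 by ring,
      Real.rpow_add_one (two_ne_zero), Real.rpow_add_one (two_ne_zero)]; ring
  have hG2 : Real.Gamma (((v:ℝ) + 2) / 2) = ((v:ℝ) / 2) * G := by
    rw [hG_def, show ((v:ℝ) + 2) / 2 = (v:ℝ) / 2 + 1 by ring,
      Real.Gamma_add_one (by positivity)]
  have hG4 : Real.Gamma (((v:ℝ) + 4) / 2) = ((v:ℝ) / 2 + 1) * (((v:ℝ) / 2) * G) := by
    rw [hG_def, show ((v:ℝ) + 4) / 2 = ((v:ℝ) / 2 + 1) + 1 by ring,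
      Real.Gamma_add_one (by positivity),
      Real.Gamma_add_one (ne_of_gt (by linarith : (0:ℝ) < (v:ℝ) / 2))]
  have hc0 : chiCDF (v : ℝ) x = (P * G)⁻¹ * g0 := by
    rw [chiCDF_eq hx.le, e0]
  have hc2 : chiCDF ((v : ℝ) + 2) x = (2 * P * (((v:ℝ) / 2) * G))⁻¹ * g2 := by
    rw [chiCDF_eq hx.le, e2, hP2, hG2]
  have hc4 : chiCDF ((v : ℝ) + 4) x = (4 * P * (((v:ℝ) / 2 + 1) * (((v:ℝ) / 2) * G)))⁻¹ * g4 := by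
    rw [chiCDF_eq hx.le, e4, hP4, hG4]
  rw [hc0, hc2, hc4]
  have hK : (0:ℝ) < ((v:ℝ) * P ^ 2 * G ^ 2)⁻¹ := by positivity
  have hmul := mul_lt_mul_of_pos_right hcs hK
  calc (v:ℝ) * ((2 * P * ((v:ℝ) / 2 * G))⁻¹ * g2) ^ 2
      = g2 ^ 2 * ((v:ℝ) * P ^ 2 * G ^ 2)⁻¹ := by
        field_simp
    _ < (g0 * g4) * ((v:ℝ) * P ^ 2 * G ^ 2)⁻¹ := hmul
    _ = ((v:ℝ) + 2) * ((4 * P * (((v:ℝ) / 2 + 1) * ((v:ℝ) / 2 * G)))⁻¹ * g4)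
          * ((P * G)⁻¹ * g0) := by
        field_simp
        ring

/-- All-ones matrix. -/
def onesM (v : ℕ) : Matrix (Fin v) (Fin v) ℝ := Matrix.of fun _ _ => 1

lemma onesM_mul_onesM (v : ℕ) : onesM v * onesM v = (v : ℝ) • onesM v := by
  ext i j
  simp [onesM, Matrix.mul_apply]

lemma combo (v : ℕ) (a b c d : ℝ) :
    ((a • (1 : Matrix (Fin v) (Fin v) ℝ) + b • onesM v) * (c • 1 + d • onesM v))
      = (a * c) • (1 : Matrix (Fin v) (Fin v) ℝ)
        + (a * d + b * c + (v : ℝ) * (b * d)) • onesM v := by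
  simp only [Matrix.add_mul, Matrix.mul_add, Matrix.smul_mul, Matrix.mul_smul,
    onesM_mul_onesM, Matrix.one_mul, Matrix.mul_one, smul_smul]
  module

end Aux

/-- The explicit matrix `M(x)` is a right inverse of `J(x)`. -/
theorem Jmat_mul_inverse (v : ℕ) (hv : 1 ≤ v) (x : ℝ) (hx : 0 < x) :
    Jmat v x * (Matrix.of fun j k =>
      (chiCDF v x / chiCDF (v + 4) x) *
        ((((v : ℝ) + 2) * (if j = k then (1 : ℝ) else 0) - 1) * chiCDF (v + 4) x / chiCDF v x
          - ((v : ℝ) * (if j = k then (1 : ℝ) else 0) - 1)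
              * (chiCDF (v + 2) x) ^ 2 / (chiCDF v x) ^ 2) /
        (((v : ℝ) + 2) * chiCDF (v + 4) x / chiCDF v x
          - (v : ℝ) * (chiCDF (v + 2) x) ^ 2 / (chiCDF v x) ^ 2)) = 1 := by
  have hv0 : (0:ℝ) < (v : ℝ) := by exact_mod_cast hv
  set F0 := chiCDF (v : ℝ) x with hF0def
  set F2 := chiCDF ((v : ℝ) + 2) x with hF2def
  set F4 := chiCDF ((v : ℝ) + 4) x with hF4def
  have hF0 : 0 < F0 := chiCDF_pos hv0 hx
  have hF2 : 0 < F2 := chiCDF_pos (by linarith) hx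
  have hF4 : 0 < F4 := chiCDF_pos (by linarith) hx
  have hkey : (v : ℝ) * F2 ^ 2 < ((v : ℝ) + 2) * F4 * F0 := key_ineq v hv hx
  have hN : ((v : ℝ) + 2) * F4 * F0 - (v : ℝ) * F2 ^ 2 ≠ 0 := ne_of_gt (by linarith)
  have hDeq : ((v : ℝ) + 2) * F4 / F0 - (v : ℝ) * F2 ^ 2 / F0 ^ 2
      = (((v : ℝ) + 2) * F4 * F0 - (v : ℝ) * F2 ^ 2) / F0 ^ 2 := by
    field_simp
  rw [hDeq]
  set Dn := (((v : ℝ) + 2) * F4 * F0 - (v : ℝ) * F2 ^ 2) / F0 ^ 2 with hDn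
  have hDn0 : Dn ≠ 0 := div_ne_zero hN (by positivity)
  set XM := (F0 / F4) * ((((v : ℝ) + 2) * 1 - 1) * F4 / F0
    - ((v : ℝ) * 1 - 1) * F2 ^ 2 / F0 ^ 2) / Dn with hXM
  set YM := (F0 / F4) * ((((v : ℝ) + 2) * 0 - 1) * F4 / F0
    - ((v : ℝ) * 0 - 1) * F2 ^ 2 / F0 ^ 2) / Dn with hYM
  have hM : (Matrix.of fun j k : Fin v =>
      (F0 / F4) * ((((v : ℝ) + 2) * (if j = k then (1 : ℝ) else 0) - 1) * F4 / F0
        - ((v : ℝ) * (if j = k then (1 : ℝ) else 0) - 1) * F2 ^ 2 / F0 ^ 2) / Dn)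
      = (XM - YM) • (1 : Matrix (Fin v) (Fin v) ℝ) + YM • onesM v := by
    ext j k
    by_cases h : j = k <;>
      simp [onesM, Matrix.one_apply, h, hXM, hYM] <;> ring
  have hJ : Jmat v x = (F4 / F0) • (1 : Matrix (Fin v) (Fin v) ℝ)
      + ((1 / 2) * (F4 / F0 - F2 ^ 2 / F0 ^ 2)) • onesM v := by
    ext k j
    by_cases h : k = j <;>
      simp [Jmat, onesM, Matrix.one_apply, h, ← hF0def, ← hF2def, ← hF4def] <;> ring
  rw [hM, hJ, combo]
  have hN' : F4 * F0 * 2 + F4 * F0 * (v : ℝ) - (v : ℝ) * F2 ^ 2 ≠ 0 := by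
    intro h; apply hN; linear_combination h
  have h1 : F4 / F0 * (XM - YM) = 1 := by
    rw [hXM, hYM, hDn]
    field_simp
    ring_nf
    rw [← mul_inv_cancel₀ hN']
    ring
  have h2 : F4 / F0 * YM + 1 / 2 * (F4 / F0 - F2 ^ 2 / F0 ^ 2) * (XM - YM)
      + (v : ℝ) * (1 / 2 * (F4 / F0 - F2 ^ 2 / F0 ^ 2) * YM) = 0 := by
    rw [hXM, hYM, hDn]
    field_simp
    ring
  rw [h1, h2]
  simp
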